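/- Assume in addition that Ĝ is continuously differentiable and that R̂ is twice continuously differentiable with R̂''(y) < 0 for all y ≥ y₀. Then the map y ↦ z_y (where z_y is the unique root in (y,∞) of η(·,y) = 0) is continuously differentiable on [y₀,∞), strictly increasing, and z_y → ∞ as y → ∞. In particular, at the root one has ∂η/∂y (z_y, y) = −R̂''(y) > 0. -/

import Mathlib

open Set Filter
open scoped Topology

private lemma mvt_ne (f f' : ℝ → ℝ) {a b : ℝ} (hab : a ≠ b)
    (h : ∀ x ∈ Icc (min a b) (max a b), HasDerivAt f (f' x) x) :
    ∃ c ∈ Ioo (min a b) (max a b), f b - f a = f' c * (b - a) := by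
  rcases lt_or_gt_of_ne hab with hlt | hgt
  · rw [min_eq_left hlt.le, max_eq_right hlt.le] at h ⊢
    obtain ⟨c, hc, hceq⟩ := exists_hasDerivAt_eq_slope f f' hlt
      (fun x hx => (h x hx).continuousAt.continuousWithinAt)
      (fun x hx => h x (Ioo_subset_Icc_self hx))
    refine ⟨c, hc, ?_⟩
    rw [hceq, div_mul_cancel₀ _ (sub_ne_zero.mpr hab.symm)]
  · rw [min_eq_right hgt.le, max_eq_left hgt.le] at h ⊢
    obtain ⟨c, hc, hceq⟩ := exists_hasDerivAt_eq_slope f f' hgt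
      (fun x hx => (h x hx).continuousAt.continuousWithinAt)
      (fun x hx => h x (Ioo_subset_Icc_self hx))
    refine ⟨c, hc, ?_⟩
    have h2 : f a - f b = f' c * (a - b) := by
      rw [hceq, div_mul_cancel₀ _ (sub_ne_zero.mpr hab)]
    rw [show b - a = -(a - b) by ring, mul_neg, ← h2]; ring

private lemma abs_sub_le_of_mem_Ioo {p q r : ℝ} (h : p ∈ Ioo (min q r) (max q r)) :
    |p - q| ≤ |r - q| := by
  rcases le_total q r with hqr | hqr
  · rw [min_eq_left hqr, max_eq_right hqr] at h
    rw [abs_of_nonneg (by linarith [h.1]), abs_of_nonneg (by linarith)]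
    linarith [h.2]
  · rw [min_eq_right hqr, max_eq_left hqr] at h
    rw [abs_of_nonpos (by linarith [h.2]), abs_of_nonpos (by linarith)]
    linarith [h.1]

/-- if moreover `Ĝ` is `C¹` and `R̂` is `C²` with `R̂'' < 0`, then `y ↦ z_y`
is continuously differentiable on `[y₀,∞)`, strictly increasing, and tends to `∞`;
at the root, `∂η/∂y (z_y, y) = −R̂''(y) > 0`. -/
theorem stmt_2
    (y₀ : ℝ) (hy₀ : 0 < y₀)
    (G R G' R' R'' : ℝ → ℝ)
    (hGdiff : ∀ z ∈ Ioi (0 : ℝ), HasDerivAt G (G' z) z)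
    (hG'cont : ContinuousOn G' (Ioi (0 : ℝ)))
    (hGconc : ConcaveOn ℝ (Ioi (0 : ℝ)) G)
    (hGpos : ∀ z ∈ Ioi (0 : ℝ), 0 < G z)
    (hGlim : Tendsto (fun z => G z / z) atTop (nhds 0))
    (hRdiff : ∀ y ∈ Ici y₀, HasDerivAt R (R' y) y)
    (hR'diff : ∀ y ∈ Ici y₀, HasDerivAt R' (R'' y) y)
    (hR''cont : ContinuousOn R'' (Ici y₀))
    (hR'pos : ∀ y ∈ Ici y₀, 0 < R' y)
    (hR''neg : ∀ y ∈ Ici y₀, R'' y < 0)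
    (hGR : ∀ y ∈ Ici y₀, R y < G y)
    (η : ℝ → ℝ → ℝ)
    (hη : ∀ z y, η z y = (G z - R y) / (z - y) - R' y)
    (zfun : ℝ → ℝ)
    (hzfun : ∀ y ∈ Ici y₀, y < zfun y ∧ η (zfun y) y = 0 ∧
      ∀ z, y < z → η z y = 0 → z = zfun y) :
    ContDiffOn ℝ 1 zfun (Ici y₀) ∧
      StrictMonoOn zfun (Ici y₀) ∧
      Tendsto zfun atTop atTop ∧
      ∀ y ∈ Ici y₀,
        HasDerivAt (fun y' => η (zfun y) y') (-R'' y) y ∧ 0 < -R'' y := by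
  have hIci : ∀ ⦃y : ℝ⦄, y ∈ Ici y₀ → (0:ℝ) < y := fun y hy => lt_of_lt_of_le hy₀ hy
  have hz_gt : ∀ y ∈ Ici y₀, y < zfun y := fun y hy => (hzfun y hy).1
  have hzpos : ∀ y ∈ Ici y₀, (0:ℝ) < zfun y := fun y hy => (hIci hy).trans (hz_gt y hy)
  -- root identity
  have hroot : ∀ y ∈ Ici y₀, G (zfun y) - R y = R' y * (zfun y - y) := by
    intro y hy
    have h0 := (hzfun y hy).2.1
    rw [hη] at h0
    have hne : zfun y - y ≠ 0 := sub_ne_zero.mpr (ne_of_gt (hz_gt y hy))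
    field_simp at h0
    linarith [h0]
  have hφy : ∀ y ∈ Ici y₀, 0 < G y - R y := fun y hy => sub_pos.mpr (hGR y hy)
  -- beyond the root, the tangent-line defect is negative
  have hbeyond : ∀ y ∈ Ici y₀, ∀ z, zfun y < z → G z - R y - R' y * (z - y) < 0 := by
    intro y hy z hz
    have hyw : y < zfun y := hz_gt y hy
    have hwz : zfun y < z := hz
    have hyz : y < z := hyw.trans hwz
    have hzy : (0:ℝ) < z - y := by linarith
    have ha : (0:ℝ) ≤ (z - zfun y) / (z - y) := div_nonneg (by linarith) (by linarith)
    have hb : (0:ℝ) ≤ (zfun y - y) / (z - y) := div_nonneg (by linarith) (by linarith)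
    have hab : (z - zfun y) / (z - y) + (zfun y - y) / (z - y) = 1 := by
      rw [← add_div, show z - zfun y + (zfun y - y) = z - y by ring]
      exact div_self hzy.ne'
    have combo : ((z - zfun y) / (z - y)) • y + ((zfun y - y) / (z - y)) • z = zfun y := by
      simp only [smul_eq_mul]
      field_simp
      ring
    have hc := hGconc.2 (show y ∈ Ioi (0:ℝ) from hIci hy)
      (show z ∈ Ioi (0:ℝ) from (hIci hy).trans hyz) ha hb hab
    rw [combo] at hc
    simp only [smul_eq_mul] at hc
    have key : (z - zfun y) * G y + (zfun y - y) * G z ≤ (z - y) * G (zfun y) := by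
      have h2 := mul_le_mul_of_nonneg_right hc hzy.le
      calc (z - zfun y) * G y + (zfun y - y) * G z
          = ((z - zfun y) / (z - y) * G y + (zfun y - y) / (z - y) * G z) * (z - y) := by
            field_simp
        _ ≤ G (zfun y) * (z - y) := h2
        _ = (z - y) * G (zfun y) := mul_comm _ _
    nlinarith [hroot y hy, hφy y hy, sub_pos.mpr hwz, sub_pos.mpr hyw]
  -- the slope of G at the root is below R' y
  have hG'lt : ∀ y ∈ Ici y₀, G' (zfun y) < R' y := by
    intro y hy
    have hyz := hz_gt y hy
    have hzy : (0:ℝ) < zfun y - y := by linarith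
    have hs := hGconc.le_slope_of_hasDerivAt (show y ∈ Ioi (0:ℝ) from hIci hy)
      (show zfun y ∈ Ioi (0:ℝ) from hzpos y hy) hyz (hGdiff (zfun y) (hzpos y hy))
    rw [slope_def_field] at hs
    have h2 : (G (zfun y) - G y) / (zfun y - y) < R' y := by
      rw [div_lt_iff₀ hzy]
      nlinarith [hroot y hy, hφy y hy]
    exact lt_of_le_of_lt hs h2
  have hDneg : ∀ y ∈ Ici y₀, G' (zfun y) - R' y < 0 :=
    fun y hy => sub_neg.mpr (hG'lt y hy)
  -- R' strictly decreasing, R strictly increasing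
  have hR'cont : ContinuousOn R' (Ici y₀) :=
    fun x hx => (hR'diff x hx).continuousAt.continuousWithinAt
  have hRcont : ContinuousOn R (Ici y₀) :=
    fun x hx => (hRdiff x hx).continuousAt.continuousWithinAt
  have hR'anti : StrictAntiOn R' (Ici y₀) := by
    apply strictAntiOn_of_deriv_neg (convex_Ici y₀) hR'cont
    intro x hx
    rw [interior_Ici] at hx
    rw [(hR'diff x (mem_Ici.mpr (le_of_lt (mem_Ioi.mp hx)))).deriv]
    exact hR''neg x (mem_Ici.mpr (le_of_lt (mem_Ioi.mp hx)))
  have hRmono : StrictMonoOn R (Ici y₀) := by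
    apply strictMonoOn_of_deriv_pos (convex_Ici y₀) hRcont
    intro x hx
    rw [interior_Ici] at hx
    rw [(hRdiff x (mem_Ici.mpr (le_of_lt (mem_Ioi.mp hx)))).deriv]
    exact hR'pos x (mem_Ici.mpr (le_of_lt (mem_Ioi.mp hx)))
  -- strict monotonicity of zfun
  have hmono : StrictMonoOn zfun (Ici y₀) := by
    intro y₁ h₁ y₂ h₂ h₁₂
    rcases le_or_gt (zfun y₁) y₂ with hle | hlt
    · exact lt_of_le_of_lt hle (hz_gt y₂ h₂)
    · -- y₂ < zfun y₁
      have hbr : 0 < R y₁ + R' y₁ * (y₂ - y₁) - R y₂ := by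
        obtain ⟨c, hc, hceq⟩ := exists_hasDerivAt_eq_slope R R' h₁₂
          (fun x hx => (hRdiff x (le_trans h₁ hx.1)).continuousAt.continuousWithinAt)
          (fun x hx => hRdiff x (le_trans h₁ hx.1.le))
        have hcI : c ∈ Ici y₀ := le_trans h₁ hc.1.le
        have hc2 : R' c < R' y₁ := hR'anti h₁ hcI hc.1
        have h3 : R y₂ - R y₁ = R' c * (y₂ - y₁) := by
          rw [hceq, div_mul_cancel₀ _ (sub_ne_zero.mpr (ne_of_gt h₁₂))]
        nlinarith [sub_pos.mpr h₁₂]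
      have hφpos : 0 < G (zfun y₁) - R y₂ - R' y₂ * (zfun y₁ - y₂) := by
        have hr := hroot y₁ h₁
        have hanti := hR'anti h₁ h₂ h₁₂
        nlinarith [sub_pos.mpr hlt]
      by_contra hcon
      push_neg at hcon
      rcases lt_or_eq_of_le hcon with hlt2 | heq
      · linarith [hbeyond y₂ h₂ (zfun y₁) hlt2]
      · have hr := hroot y₂ h₂
        rw [heq] at hr
        linarith
  -- upward solvability (surjectivity above any root)
  have hroots : ∀ y ∈ Ici y₀, ∀ t, zfun y < t → ∃ y', y < y' ∧ y' ∈ Ici y₀ ∧ zfun y' = t := by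
    intro y hy t ht
    have hyt : y < t := (hz_gt y hy).trans ht
    have htI : t ∈ Ici y₀ := le_of_lt (lt_of_le_of_lt hy hyt)
    have hm : 0 < G t - R t := hφy t htI
    obtain ⟨M, hM0, hM⟩ : ∃ M, 0 < M ∧ ∀ b ∈ Icc y t, R' b ≤ M := by
      have hcont' : ContinuousOn R' (Icc y t) :=
        fun b hb => ((hR'diff b (le_trans hy hb.1)).continuousAt).continuousWithinAt
      obtain ⟨b₀, hb₀, hmax⟩ := isCompact_Icc.exists_isMaxOn
        (nonempty_Icc.mpr hyt.le) hcont'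
      exact ⟨max (R' b₀) 1, lt_of_lt_of_le zero_lt_one (le_max_right _ _),
        fun b hb => le_trans (hmax hb) (le_max_left _ _)⟩
    set ε := min ((G t - R t) / M) (t - y) / 2 with hεdef
    have hε : 0 < ε := half_pos (lt_min (div_pos hm hM0) (sub_pos.mpr hyt))
    have hεty : ε < t - y := by
      have := min_le_right ((G t - R t) / M) (t - y)
      have h2 : 0 < t - y := sub_pos.mpr hyt
      rw [hεdef]; linarith
    have hεM : ε * (2 * M) ≤ G t - R t := by
      have h5 : ε ≤ (G t - R t) / M / 2 := by
        have := min_le_left ((G t - R t) / M) (t - y)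
        rw [hεdef]; linarith
      calc ε * (2 * M) ≤ (G t - R t) / M / 2 * (2 * M) :=
            mul_le_mul_of_nonneg_right h5 (by positivity)
        _ = G t - R t := by
            field_simp
    set β := t - ε with hβdef
    have hβy : y < β := by rw [hβdef]; linarith
    have hβt : β < t := by rw [hβdef]; linarith
    have hβI : β ∈ Ici y₀ := le_of_lt (lt_of_le_of_lt hy hβy)
    set f : ℝ → ℝ := fun b => (G t - R b) / (t - b) - R' b with hfdef
    have hfy : f y < 0 := by
      have hb := hbeyond y hy t ht
      have heq : f y = (G t - R y - R' y * (t - y)) / (t - y) := by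
        have hne : t - y ≠ 0 := sub_ne_zero.mpr (ne_of_gt hyt)
        rw [hfdef]
        field_simp
      rw [heq]
      exact div_neg_of_neg_of_pos hb (by linarith)
    have hfβ : 0 < f β := by
      have h1 : R β < R t := hRmono hβI htI hβt
      have h2 : R' β ≤ M := hM β ⟨hβy.le, hβt.le⟩
      have h3 : t - β = ε := by rw [hβdef]; ring
      rw [hfdef]
      simp only []
      rw [h3, lt_sub_iff_add_lt, zero_add, lt_div_iff₀ hε]
      nlinarith [mul_le_mul_of_nonneg_right h2 hε.le]
    have hfc : ContinuousOn f (Icc y β) := by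
      apply ContinuousOn.sub
      · apply ContinuousOn.div
        · exact continuousOn_const.sub (hRcont.mono (fun b hb => le_trans hy hb.1))
        · exact continuousOn_const.sub continuousOn_id
        · intro b hb
          have : b < t := lt_of_le_of_lt hb.2 hβt
          exact sub_ne_zero.mpr (ne_of_gt this)
      · exact hR'cont.mono (fun b hb => le_trans hy hb.1)
    have h0mem : (0:ℝ) ∈ Icc (f y) (f β) := ⟨hfy.le, hfβ.le⟩
    obtain ⟨b, hb, hfb⟩ := intermediate_value_Icc hβy.le hfc h0mem
    have hby : y < b := by
      rcases lt_or_eq_of_le hb.1 with h | h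
      · exact h
      · exfalso; rw [← h] at hfb; linarith
    have hbt : b < t := lt_of_le_of_lt hb.2 hβt
    have hbI : b ∈ Ici y₀ := le_trans hy hby.le
    have hzb : zfun b = t := by
      refine ((hzfun b hbI).2.2 t hbt ?_).symm
      rw [hη]; exact hfb
    exact ⟨b, hby, hbI, hzb⟩
  -- continuity of zfun
  have hcont : ∀ y ∈ Ici y₀, ContinuousWithinAt zfun (Ici y₀) y := by
    intro y hy
    rw [Metric.continuousWithinAt_iff]
    intro ε hε
    obtain ⟨yp, hyp, hypI, hypz⟩ := hroots y hy (zfun y + ε/2) (by linarith)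
    have hmonole : ∀ a ∈ Ici y₀, ∀ b ∈ Ici y₀, a ≤ b → zfun a ≤ zfun b := by
      intro a ha b hb hab
      rcases lt_or_eq_of_le hab with h | h
      · exact (hmono ha hb h).le
      · rw [h]
    have hlow : ∃ δ > 0, ∀ y' ∈ Ici y₀, |y' - y| < δ → zfun y - ε < zfun y' := by
      rcases lt_or_ge (zfun y - ε) (zfun y₀) with h | h
      · exact ⟨1, one_pos, fun y' hy' _ =>
          lt_of_lt_of_le h (hmonole y₀ (le_refl y₀) y' hy' hy')⟩
      · have hy₀y : y₀ < y := by
          rcases lt_or_eq_of_le (mem_Ici.mp hy) with h' | h'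
          · exact h'
          · exfalso; rw [← h'] at h; linarith
        rcases lt_or_eq_of_le h with hlt | heq
        · obtain ⟨ym, hym, hymI, hymz⟩ := hroots y₀ (le_refl y₀) (zfun y - ε) hlt
          have hymy : ym < y := by
            have h1 : zfun ym < zfun y := by rw [hymz]; linarith
            by_contra h'
            push_neg at h'
            exact absurd h1 (not_lt.mpr (hmonole y hy ym hymI h'))
          refine ⟨y - ym, by linarith, fun y' hy' hd => ?_⟩
          rw [abs_lt] at hd
          have : ym < y' := by linarith
          have := hmono hymI hy' this
          rw [hymz] at this
          linarith
        · refine ⟨y - y₀, by linarith, fun y' hy' hd => ?_⟩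
          rw [abs_lt] at hd
          have h1 : y₀ < y' := by linarith
          have := hmono (le_refl y₀) hy' h1
          rw [heq] at this
          linarith
    obtain ⟨δ₁, hδ₁, hδlow⟩ := hlow
    refine ⟨min δ₁ (yp - y), lt_min hδ₁ (by linarith), fun y' hy' hd => ?_⟩
    rw [Real.dist_eq] at hd ⊢
    rw [abs_lt]
    constructor
    · have := hδlow y' hy' (lt_of_lt_of_le hd (min_le_left _ _))
      linarith
    · have h1 : |y' - y| < yp - y := lt_of_lt_of_le hd (min_le_right _ _)
      rw [abs_lt] at h1
      have h2 : y' < yp := by linarith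
      have := hmono hy' hypI h2
      rw [hypz] at this
      linarith
  -- the derivative of zfun
  have hderiv : ∀ y ∈ Ici y₀,
      HasDerivWithinAt zfun (R'' y * (zfun y - y) / (G' (zfun y) - R' y)) (Ici y₀) y := by
    intro y hy
    have hDne : G' (zfun y) - R' y ≠ 0 := ne_of_lt (hDneg y hy)
    rw [hasDerivWithinAt_iff_tendsto_slope]
    set l := 𝓝[Ici y₀ \ {y}] y with hldef
    set z := zfun y with hzdef
    have hyz : y < z := hz_gt y hy
    have key : ∀ y' ∈ Ici y₀, y' ≠ y → y' < z → ∃ c,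
        (|c - y| ≤ |y' - y| ∧ y₀ ≤ c) ∧ ∃ ξ,
        (|ξ - z| ≤ |zfun y' - z| ∧ 0 < ξ) ∧
        slope zfun y y' = R'' c * (z - c) / (G' ξ - R' y') := by
      intro y' hy' hne hlt
      have hz'ne : zfun y' ≠ z := fun h => hne (hmono.injOn hy' hy h)
      have hminI : y₀ ≤ min y y' := le_min hy hy'
      have hmax_lt : max y y' < z := max_lt hyz hlt
      -- MVT for b ↦ G z - R b - R' b * (z - b)
      obtain ⟨c, hc, hceq⟩ := mvt_ne (fun b => G z - R b - R' b * (z - b))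
        (fun b => -R'' b * (z - b)) (Ne.symm hne)
        (by
          intro x hx
          have hxI : x ∈ Ici y₀ := le_trans hminI hx.1
          have h1 : HasDerivAt (fun b => R' b * (z - b))
              (R'' x * (z - x) + R' x * (0 - 1)) x :=
            (hR'diff x hxI).mul ((hasDerivAt_const x z).sub (hasDerivAt_id x))
          have h2 := ((hasDerivAt_const x (G z)).sub (hRdiff x hxI)).sub h1
          exact h2.congr_deriv (by ring))
      have hcI : y₀ ≤ c := le_trans hminI hc.1.le
      have hcz : c < z := hc.2.trans hmax_lt
      -- MVT for G between z and zfun y'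
      obtain ⟨ξ, hξ, hξeq⟩ := mvt_ne G G' (Ne.symm hz'ne)
        (by
          intro x hx
          have hx0 : (0:ℝ) < x :=
            lt_of_lt_of_le (lt_min (hzpos y hy) (hzpos y' hy')) hx.1
          exact hGdiff x hx0)
      have hξ0 : 0 < ξ := lt_of_lt_of_le (lt_min (hzpos y hy) (hzpos y' hy')) hξ.1.le
      -- combine
      have hr := hroot y hy
      have hr' := hroot y' hy'
      have heq : (G' ξ - R' y') * (zfun y' - z) = R'' c * (z - c) * (y' - y) := by
        have e1 : (G z - R y' - R' y' * (z - y')) - (G z - R y - R' y * (z - y))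
            = -R'' c * (z - c) * (y' - y) := hceq
        -- G (zfun y') - G z = G' ξ * (zfun y' - z)
        have e2 : G (zfun y') - G z = G' ξ * (zfun y' - z) := hξeq
        nlinarith [e1, e2, hr, hr']
      have hrne : R'' c * (z - c) * (y' - y) ≠ 0 := by
        have h1 : R'' c < 0 := hR''neg c hcI
        have h2 : (0:ℝ) < z - c := by linarith
        have h3 : y' - y ≠ 0 := sub_ne_zero.mpr hne
        exact mul_ne_zero (mul_ne_zero (ne_of_lt h1) (ne_of_gt h2)) h3
      have hdenne : G' ξ - R' y' ≠ 0 := by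
        intro h
        rw [h, zero_mul] at heq
        exact hrne heq.symm
      refine ⟨c, ⟨abs_sub_le_of_mem_Ioo hc, hcI⟩, ξ,
        ⟨abs_sub_le_of_mem_Ioo hξ, hξ0⟩, ?_⟩
      rw [slope_def_field, div_eq_div_iff (sub_ne_zero.mpr hne) hdenne]
      linarith [heq]
    -- filter arguments
    have hl_le : l ≤ 𝓝 y := nhdsWithin_le_nhds
    have hev : ∀ᶠ y' in l, y' ∈ Ici y₀ \ {y} := self_mem_nhdsWithin
    have hevlt : ∀ᶠ y' in l, y' < z := hl_le (Iio_mem_nhds hyz)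
    classical
    have key' : ∀ y', ∃ c, ∃ ξ, (y' ∈ Ici y₀ ∧ y' ≠ y ∧ y' < z) →
        ((|c - y| ≤ |y' - y| ∧ y₀ ≤ c) ∧ (|ξ - z| ≤ |zfun y' - z| ∧ 0 < ξ) ∧
          slope zfun y y' = R'' c * (z - c) / (G' ξ - R' y')) := by
      intro y'
      by_cases h : y' ∈ Ici y₀ ∧ y' ≠ y ∧ y' < z
      · obtain ⟨c, hc1, ξ, hξ1, hs⟩ := key y' h.1 h.2.1 h.2.2
        exact ⟨c, ξ, fun _ => ⟨hc1, hξ1, hs⟩⟩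
      · exact ⟨y, z, fun h' => absurd h' h⟩
    choose cf ξf hkey using key'
    have hev3 : ∀ᶠ y' in l,
        (|cf y' - y| ≤ |y' - y| ∧ y₀ ≤ cf y') ∧
        (|ξf y' - z| ≤ |zfun y' - z| ∧ 0 < ξf y') ∧
        slope zfun y y' = R'' (cf y') * (z - cf y') / (G' (ξf y') - R' y') :=
      (hev.and hevlt).mono fun y' h => hkey y' ⟨h.1.1, h.1.2, h.2⟩
    have tid : Tendsto (fun y' : ℝ => y') l (𝓝 y) := tendsto_id.mono_left hl_le
    have tdist : Tendsto (fun y' => |y' - y|) l (𝓝 0) := by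
      have := (tid.sub (tendsto_const_nhds : Tendsto (fun _ : ℝ => y) l (𝓝 y))).abs
      simpa using this
    have tc : Tendsto cf l (𝓝 y) := by
      rw [tendsto_iff_dist_tendsto_zero]
      simp only [Real.dist_eq]
      exact squeeze_zero' (Eventually.of_forall fun _ => abs_nonneg _)
        (hev3.mono fun y' h => h.1.1) tdist
    have tz' : Tendsto zfun l (𝓝 z) :=
      (hcont y hy).mono_left (nhdsWithin_mono y diff_subset)
    have tdistz : Tendsto (fun y' => |zfun y' - z|) l (𝓝 0) := by
      have := (tz'.sub (tendsto_const_nhds : Tendsto (fun _ : ℝ => z) l (𝓝 z))).abs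
      simpa using this
    have tξ : Tendsto ξf l (𝓝 z) := by
      rw [tendsto_iff_dist_tendsto_zero]
      simp only [Real.dist_eq]
      exact squeeze_zero' (Eventually.of_forall fun _ => abs_nonneg _)
        (hev3.mono fun y' h => h.2.1.1) tdistz
    have tR'' : Tendsto (fun y' => R'' (cf y')) l (𝓝 (R'' y)) := by
      apply (hR''cont y hy).tendsto.comp
      rw [tendsto_nhdsWithin_iff]
      exact ⟨tc, hev3.mono fun y' h => h.1.2⟩
    have tG' : Tendsto (fun y' => G' (ξf y')) l (𝓝 (G' z)) :=
      ((hG'cont.continuousAt (Ioi_mem_nhds (hzpos y hy))).tendsto.comp tξ)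
    have tR' : Tendsto R' l (𝓝 (R' y)) :=
      (hR'diff y hy).continuousAt.tendsto.mono_left hl_le
    have tmain : Tendsto (fun y' => R'' (cf y') * (z - cf y') / (G' (ξf y') - R' y')) l
        (𝓝 (R'' y * (z - y) / (G' z - R' y))) :=
      (tR''.mul (tendsto_const_nhds.sub tc)).div (tG'.sub tR') hDne
    exact tmain.congr' (hev3.mono fun y' h => h.2.2.symm)
  -- assemble
  have hdiffOn : DifferentiableOn ℝ zfun (Ici y₀) :=
    fun y hy => (hderiv y hy).differentiableWithinAt
  have hcontz : ContinuousOn zfun (Ici y₀) := hdiffOn.continuousOn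
  refine ⟨?_, hmono, ?_, fun y hy => ⟨?_, neg_pos.mpr (hR''neg y hy)⟩⟩
  · -- C¹
    rw [show (1 : WithTop ℕ∞) = 0 + 1 from (zero_add 1).symm,
      contDiffOn_succ_iff_derivWithin (uniqueDiffOn_Ici y₀)]
    refine ⟨hdiffOn, by simp, ?_⟩
    rw [contDiffOn_zero]
    have heq : ∀ y ∈ Ici y₀, derivWithin zfun (Ici y₀) y
        = R'' y * (zfun y - y) / (G' (zfun y) - R' y) :=
      fun y hy => (hderiv y hy).derivWithin (uniqueDiffOn_Ici y₀ y hy)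
    apply ContinuousOn.congr _ heq
    exact ((hR''cont.mul (hcontz.sub continuousOn_id)).div
      ((hG'cont.comp hcontz (fun y hy => mem_Ioi.mpr (hzpos y hy))).sub hR'cont)
      (fun y hy => ne_of_lt (hDneg y hy)))
  · -- tendsto atTop
    apply tendsto_atTop_mono' atTop _ tendsto_id
    filter_upwards [eventually_ge_atTop y₀] with y hy
    exact (hz_gt y hy).le
  · -- derivative of η in y at the root
    have hne : zfun y - y ≠ 0 := sub_ne_zero.mpr (ne_of_gt (hz_gt y hy))
    have h1 : HasDerivAt (fun y' => (G (zfun y) - R y') / (zfun y - y') - R' y')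
        (((0 - R' y) * (zfun y - y) - (G (zfun y) - R y) * (0 - 1)) / (zfun y - y) ^ 2
          - R'' y) y :=
      (((hasDerivAt_const y (G (zfun y))).sub (hRdiff y hy)).div
        ((hasDerivAt_const y (zfun y)).sub (hasDerivAt_id y)) hne).sub (hR'diff y hy)
    have hnum : (0 - R' y) * (zfun y - y) - (G (zfun y) - R y) * (0 - 1) = 0 := by
      have := hroot y hy
      ring_nf
      ring_nf at this
      linarith
    simp only [hη]
    convert h1 using 1
    rw [hnum, zero_div, zero_sub]
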